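/- Let Z_1, Z_2 ∈ ℝ² with Z_1 ≠ Z_2 and d_1 ≥ d_2 ≥ 0, and let X be the set of global minimizers of the squared-distance-error objective O(W) = |‖W − Z_1‖² − d_1²| + |‖W − Z_2‖² − d_2²| on ℝ². Then X has exactly one element if and only if ‖Z_2 − Z_1‖ ≥ d_1 + d_2 or ‖Z_2 − Z_1‖ ≤ d_1 − d_2, and X has exactly two elements if and only if d_1 − d_2 < ‖Z_2 − Z_1‖ < d_1 + d_2. -/

import Mathlib

section helpers

lemma norm_split {E : Type*} [NormedAddCommGroup E] [InnerProductSpace ℝ E]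
    (a p : E) (α : ℝ) (h : (inner ℝ p a) = 0) :
    ‖α • a + p‖ ^ 2 = α ^ 2 * ‖a‖ ^ 2 + ‖p‖ ^ 2 := by
  rw [norm_add_sq_real, real_inner_smul_left, real_inner_comm, h, norm_smul,
    Real.norm_eq_abs, mul_pow, sq_abs]
  ring

lemma normsq_smul {E : Type*} [NormedAddCommGroup E] [NormedSpace ℝ E] (α : ℝ) (x : E) :
    ‖α • x‖ ^ 2 = α ^ 2 * ‖x‖ ^ 2 := by
  rw [norm_smul, Real.norm_eq_abs, mul_pow, sq_abs]

lemma two_abs_lower (A B c : ℝ) (hc : |c| ≤ 1) : c * A + B ≤ |A| + |B| := by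
  have h1 : c * A ≤ |A| := by
    calc c * A ≤ |c * A| := le_abs_self _
    _ = |c| * |A| := abs_mul c A
    _ ≤ 1 * |A| := mul_le_mul_of_nonneg_right hc (abs_nonneg A)
    _ = |A| := one_mul _
  linarith [le_abs_self B]

end helpers

section euclid2

lemma decomp (Z₁ Z₂ W : EuclideanSpace ℝ (Fin 2)) (hZ : Z₁ ≠ Z₂) :
    ∃ t q : ℝ, ∃ p : EuclideanSpace ℝ (Fin 2), 0 ≤ q ∧
      ‖W - Z₁‖ ^ 2 = t ^ 2 + q ∧
      ‖W - Z₂‖ ^ 2 = (t - ‖Z₂ - Z₁‖) ^ 2 + q ∧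
      W = Z₁ + (t / ‖Z₂ - Z₁‖) • (Z₂ - Z₁) + p ∧
      (inner ℝ p (Z₂ - Z₁)) = 0 ∧ ‖p‖ ^ 2 = q := by
  set a := Z₂ - Z₁ with ha
  have hane : a ≠ 0 := sub_ne_zero.2 (Ne.symm hZ)
  have hℓ : 0 < ‖a‖ := norm_pos_iff.2 hane
  set ℓ := ‖a‖ with hℓdef
  set t : ℝ := (inner ℝ (W - Z₁) a) / ℓ with ht
  set p : EuclideanSpace ℝ (Fin 2) := W - Z₁ - (t / ℓ) • a with hp
  have hpa : (inner ℝ p (Z₂ - Z₁)) = 0 := by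
    rw [hp, ← ha, inner_sub_left, real_inner_smul_left, real_inner_self_eq_norm_sq, ← hℓdef, ht]
    field_simp
    ring
  have hW1 : W - Z₁ = (t / ℓ) • a + p := by rw [hp]; abel
  have hW2 : W - Z₂ = (t / ℓ - 1) • a + p := by
    rw [hp, ha]; rw [sub_smul, one_smul]; abel
  have h1 : ‖W - Z₁‖ ^ 2 = t ^ 2 + ‖p‖ ^ 2 := by
    rw [hW1, norm_split a p _ hpa, ← hℓdef]
    field_simp
  have h2 : ‖W - Z₂‖ ^ 2 = (t - ℓ) ^ 2 + ‖p‖ ^ 2 := by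
    rw [hW2, norm_split a p _ hpa, ← hℓdef]
    field_simp
  exact ⟨t, ‖p‖ ^ 2, p, by positivity, h1, h2, by rw [hp]; abel, hpa, rfl⟩

noncomputable def perp (a : EuclideanSpace ℝ (Fin 2)) : EuclideanSpace ℝ (Fin 2) :=
  (WithLp.equiv 2 (Fin 2 → ℝ)).symm ![-(a 1), a 0]

lemma perp_apply0 (a : EuclideanSpace ℝ (Fin 2)) : perp a 0 = -(a 1) := rfl
lemma perp_apply1 (a : EuclideanSpace ℝ (Fin 2)) : perp a 1 = a 0 := rfl

lemma inner_coords (x y : EuclideanSpace ℝ (Fin 2)) :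
    (inner ℝ x y) = x 0 * y 0 + x 1 * y 1 := by
  simp [PiLp.inner_apply, Fin.sum_univ_two, RCLike.inner_apply, mul_comm]

lemma normsq_coords (x : EuclideanSpace ℝ (Fin 2)) :
    ‖x‖ ^ 2 = x 0 ^ 2 + x 1 ^ 2 := by
  rw [← real_inner_self_eq_norm_sq, inner_coords]; ring

lemma perp_inner (a : EuclideanSpace ℝ (Fin 2)) : (inner ℝ (perp a) a) = 0 := by
  rw [inner_coords, perp_apply0, perp_apply1]; ring

lemma perp_norm (a : EuclideanSpace ℝ (Fin 2)) : ‖perp a‖ = ‖a‖ := by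
  have h1 := normsq_coords (perp a)
  have h2 := normsq_coords a
  rw [perp_apply0, perp_apply1] at h1
  nlinarith [norm_nonneg (perp a), norm_nonneg a]

lemma perp_complete (a p : EuclideanSpace ℝ (Fin 2)) (ha : a ≠ 0)
    (h : (inner ℝ p a) = 0) : ∃ c : ℝ, p = c • perp a := by
  have hne : a 0 ^ 2 + a 1 ^ 2 ≠ 0 := by
    intro hc
    apply ha
    have h0 : a 0 = 0 := by nlinarith [sq_nonneg (a 0), sq_nonneg (a 1)]
    have h1 : a 1 = 0 := by nlinarith [sq_nonneg (a 0), sq_nonneg (a 1)]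
    ext i
    fin_cases i <;> simpa
  rw [inner_coords] at h
  refine ⟨(p 1 * a 0 - p 0 * a 1) / (a 0 ^ 2 + a 1 ^ 2), ?_⟩
  ext i
  fin_cases i
  · show p 0 = _ * perp a 0
    rw [perp_apply0]
    field_simp
    linear_combination a 0 * h
  · show p 1 = _ * perp a 1
    rw [perp_apply1]
    field_simp
    linear_combination a 1 * h

end euclid2

set_option maxHeartbeats 2000000 in
/-- Two measurements, squared distance error, two dimensions: the solution set `X` has
exactly one element iff `‖Z₂ - Z₁‖ ≥ d₁ + d₂` or `‖Z₂ - Z₁‖ ≤ d₁ - d₂`, and exactly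
two elements iff `d₁ - d₂ < ‖Z₂ - Z₁‖ < d₁ + d₂`. -/
theorem two_meas_squared_error_count_2D
    (Z₁ Z₂ : EuclideanSpace ℝ (Fin 2)) (hZ : Z₁ ≠ Z₂)
    (d₁ d₂ : ℝ) (hd₂ : 0 ≤ d₂) (hd : d₂ ≤ d₁)
    (O : EuclideanSpace ℝ (Fin 2) → ℝ)
    (hO : ∀ W, O W = |‖W - Z₁‖ ^ 2 - d₁ ^ 2| + |‖W - Z₂‖ ^ 2 - d₂ ^ 2|)
    (X : Set (EuclideanSpace ℝ (Fin 2)))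
    (hX : X = {W | ∀ V, O W ≤ O V}) :
    (X.encard = 1 ↔ (d₁ + d₂ ≤ ‖Z₂ - Z₁‖ ∨ ‖Z₂ - Z₁‖ ≤ d₁ - d₂)) ∧
    (X.encard = 2 ↔ (d₁ - d₂ < ‖Z₂ - Z₁‖ ∧ ‖Z₂ - Z₁‖ < d₁ + d₂)) := by
  set a := Z₂ - Z₁ with ha
  have hane : a ≠ 0 := sub_ne_zero.2 (Ne.symm hZ)
  have hℓ0 : 0 < ‖a‖ := norm_pos_iff.2 hane
  set ℓ := ‖a‖ with hℓdef
  have hℓ : 0 < ℓ := hℓ0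
  clear_value ℓ
  have hsub1 : ∀ β : ℝ, ∀ p : EuclideanSpace ℝ (Fin 2),
      (Z₁ + β • a + p) - Z₁ = β • a + p := by intro β p; abel
  have hsub2 : ∀ β : ℝ, ∀ p : EuclideanSpace ℝ (Fin 2),
      (Z₁ + β • a + p) - Z₂ = (β - 1) • a + p := by
    intro β p; rw [sub_smul, one_smul, ha]; abel
  by_cases hcase : d₁ + d₂ ≤ ℓ ∨ ℓ ≤ d₁ - d₂
  · -- unique minimizer case
    have main : ∃ Wstar, (∀ V, O Wstar ≤ O V) ∧ ∀ W, O W ≤ O Wstar → W = Wstar := by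
      by_cases h2d : 2 * d₁ < ℓ
      · -- minimizer at the midpoint
        have hOW : O (Z₁ + (1/2 : ℝ) • a + 0) = ℓ^2/2 - d₁^2 - d₂^2 := by
          rw [hO, hsub1, hsub2, add_zero, add_zero, normsq_smul, normsq_smul, ← hℓdef,
            abs_of_nonneg (by nlinarith), abs_of_nonneg (by nlinarith)]
          ring
        have hlow : ∀ V, ℓ^2/2 - d₁^2 - d₂^2 ≤ O V := by
          intro V
          obtain ⟨t, q, p, hq, e1, e2, _, _, _⟩ := decomp Z₁ Z₂ V hZ
          rw [hO, e1, e2, ← ha, ← hℓdef]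
          nlinarith [le_abs_self (t^2 + q - d₁^2), le_abs_self ((t-ℓ)^2 + q - d₂^2),
            sq_nonneg (t - ℓ/2)]
        refine ⟨Z₁ + (1/2 : ℝ) • a + 0, fun V => le_trans (le_of_eq hOW) (hlow V), ?_⟩
        intro W hW
        rw [hOW] at hW
        obtain ⟨t, q, p, hq, e1, e2, eW, _, epq⟩ := decomp Z₁ Z₂ W hZ
        rw [hO, e1, e2, ← ha, ← hℓdef] at hW
        have hA := le_abs_self (t^2 + q - d₁^2)
        have hB := le_abs_self ((t-ℓ)^2 + q - d₂^2)
        have hs : 2*q + 2*(t - ℓ/2)^2 ≤ 0 := by nlinarith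
        have hq0 : q = 0 := by nlinarith [sq_nonneg (t - ℓ/2)]
        have ht0 : t = ℓ/2 := by nlinarith [hs, hq]
        have hp0 : p = 0 := norm_eq_zero.1 (by nlinarith [norm_nonneg p])
        have hhalf : ℓ/2/ℓ = (1/2 : ℝ) := by field_simp
        rw [eW, hp0, ht0, ← ha, ← hℓdef, hhalf]
      · -- minimizer on the circle around Z₁
        push_neg at h2d
        have hd1pos : 0 < d₁ := by linarith
        have hMnn : d₂^2 ≤ (ℓ - d₁)^2 := by rcases hcase with h | h <;> nlinarith
        have hOW : O (Z₁ + (d₁/ℓ : ℝ) • a + 0) = (ℓ - d₁)^2 - d₂^2 := by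
          rw [hO, hsub1, hsub2, add_zero, add_zero, normsq_smul, normsq_smul, ← hℓdef]
          have e1 : (d₁/ℓ)^2 * ℓ^2 = d₁^2 := by field_simp
          have e2 : (d₁/ℓ - 1)^2 * ℓ^2 = (ℓ - d₁)^2 := by field_simp; ring
          rw [e1, e2, sub_self, abs_zero, abs_of_nonneg (by nlinarith)]
          ring
        have hkey : ∀ t q : ℝ, 0 ≤ q →
            ((ℓ - d₁)^2 - d₂^2) + (ℓ/d₁) * ((t - d₁)^2 + q)
              ≤ |t^2 + q - d₁^2| + |(t-ℓ)^2 + q - d₂^2| := by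
          intro t q hq
          have hc : |ℓ/d₁ - 1| ≤ 1 := by
            rw [abs_le]
            constructor
            · have : 0 ≤ ℓ/d₁ := by positivity
              linarith
            · have : ℓ/d₁ ≤ 2 := by rw [div_le_iff₀ hd1pos]; linarith
              linarith
          have hlin := two_abs_lower (t^2 + q - d₁^2) ((t-ℓ)^2 + q - d₂^2) (ℓ/d₁ - 1) hc
          have hid : (ℓ/d₁ - 1) * (t^2 + q - d₁^2) + ((t-ℓ)^2 + q - d₂^2)
              = ((ℓ - d₁)^2 - d₂^2) + (ℓ/d₁) * ((t - d₁)^2 + q) := by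
            field_simp
            ring
          linarith [hid ▸ hlin]
        have hpos : 0 < ℓ/d₁ := div_pos hℓ hd1pos
        have hlow : ∀ V, (ℓ - d₁)^2 - d₂^2 ≤ O V := by
          intro V
          obtain ⟨t, q, p, hq, e1, e2, _, _, _⟩ := decomp Z₁ Z₂ V hZ
          rw [hO, e1, e2, ← ha, ← hℓdef]
          linarith [hkey t q hq,
            mul_nonneg hpos.le (add_nonneg (sq_nonneg (t - d₁)) hq)]
        refine ⟨Z₁ + (d₁/ℓ : ℝ) • a + 0, fun V => le_trans (le_of_eq hOW) (hlow V), ?_⟩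
        intro W hW
        rw [hOW] at hW
        obtain ⟨t, q, p, hq, e1, e2, eW, _, epq⟩ := decomp Z₁ Z₂ W hZ
        rw [hO, e1, e2, ← ha, ← hℓdef] at hW
        have hk := hkey t q hq
        have hsum : (t - d₁)^2 + q ≤ 0 := by nlinarith [hk, hpos]
        have hq0 : q = 0 := by nlinarith [hsum, sq_nonneg (t - d₁)]
        have ht0 : t = d₁ := by nlinarith [hsum, hq]
        have hp0 : p = 0 := norm_eq_zero.1 (by nlinarith [norm_nonneg p])
        rw [eW, hp0, ht0, ← ha, ← hℓdef]
    obtain ⟨Wstar, hmin, huniq⟩ := main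
    have hXeq : X = {Wstar} := by
      rw [hX]; ext W
      simp only [Set.mem_setOf_eq, Set.mem_singleton_iff]
      exact ⟨fun h => huniq W (h Wstar), fun h => h ▸ hmin⟩
    constructor
    · exact ⟨fun _ => hcase, fun _ => by rw [hXeq]; exact Set.encard_singleton _⟩
    · constructor
      · intro h
        rw [hXeq, Set.encard_singleton] at h
        exact absurd h (by decide)
      · rintro ⟨hlt1, hlt2⟩
        rcases hcase with h | h <;> linarith
  · push_neg at hcase
    obtain ⟨h1, h2⟩ := hcase
    -- h1 : ℓ < d₁ + d₂, h2 : d₁ - d₂ < ℓ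
    set t₀ : ℝ := (ℓ^2 + d₁^2 - d₂^2) / (2*ℓ) with ht₀
    set q₀ : ℝ := d₁^2 - t₀^2 with hq₀
    clear_value t₀
    clear_value q₀
    have hkey4 : 4*ℓ^2*q₀ = ((d₁+d₂)^2 - ℓ^2)*(ℓ^2 - (d₁-d₂)^2) := by
      rw [hq₀, ht₀]
      field_simp
      ring
    have hq₀pos : 0 < q₀ := by
      have f1 : 0 < (d₁+d₂)^2 - ℓ^2 := by nlinarith
      have f2 : 0 < ℓ^2 - (d₁-d₂)^2 := by nlinarith
      nlinarith [mul_pos f1 f2, mul_pos hℓ hℓ]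
    have hr : Real.sqrt q₀ ^ 2 = q₀ := Real.sq_sqrt hq₀pos.le
    have hrpos : 0 < Real.sqrt q₀ := Real.sqrt_pos.2 hq₀pos
    set r : ℝ := Real.sqrt q₀ with hrdef
    clear_value r
    set v : EuclideanSpace ℝ (Fin 2) := perp a with hv
    have hva : (inner ℝ v a) = 0 := perp_inner a
    have hvn : ‖v‖ = ℓ := by rw [hv, hℓdef]; exact perp_norm a
    have hvne : v ≠ 0 := by
      intro hcon
      rw [hcon, norm_zero] at hvn
      exact absurd hvn.symm (ne_of_gt hℓ)
    clear_value v
    have hsq : ∀ x : ℝ, (x/ℓ)^2 * ℓ^2 = x^2 := by intro x; field_simp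
    have hcirc : ∀ c : ℝ, ‖(Z₁ + (t₀/ℓ) • a + c • v) - Z₁‖^2 = t₀^2 + c^2 * ℓ^2 ∧
        ‖(Z₁ + (t₀/ℓ) • a + c • v) - Z₂‖^2 = (t₀ - ℓ)^2 + c^2 * ℓ^2 := by
      intro c
      have hinn : (inner ℝ (c • v) a) = 0 := by
        rw [real_inner_smul_left, hva, mul_zero]
      constructor
      · rw [hsub1, norm_split a (c • v) _ hinn, normsq_smul, hvn, ← hℓdef, hsq]
      · rw [hsub2, norm_split a (c • v) _ hinn, normsq_smul, hvn]
        rw [← hℓdef]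
        have e2 : (t₀/ℓ - 1)^2 * ℓ^2 = (t₀ - ℓ)^2 := by field_simp <;> ring
        rw [e2]
    have ht₀sq : (t₀ - ℓ)^2 + q₀ = d₂^2 := by
      rw [hq₀, ht₀]
      field_simp
      ring
    have hOzero : ∀ c : ℝ, c^2 * ℓ^2 = q₀ → O (Z₁ + (t₀/ℓ) • a + c • v) = 0 := by
      intro c hc
      obtain ⟨hc1, hc2⟩ := hcirc c
      rw [hO, hc1, hc2, hc]
      have e1 : t₀^2 + q₀ - d₁^2 = 0 := by rw [hq₀]; ring
      have e2 : (t₀ - ℓ)^2 + q₀ - d₂^2 = 0 := by linarith [ht₀sq]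
      rw [e1, e2]
      norm_num
    have hcsq : (r/ℓ)^2 * ℓ^2 = q₀ := by rw [hsq]; exact hr
    have hcsq' : (-(r/ℓ))^2 * ℓ^2 = q₀ := by rw [neg_pow]; simpa using hcsq
    set Wp : EuclideanSpace ℝ (Fin 2) := Z₁ + (t₀/ℓ) • a + (r/ℓ) • v with hWp
    set Wm : EuclideanSpace ℝ (Fin 2) := Z₁ + (t₀/ℓ) • a + (-(r/ℓ)) • v with hWm
    clear_value Wp
    clear_value Wm
    have hOp : O Wp = 0 := by rw [hWp]; exact hOzero _ hcsq
    have hOm : O Wm = 0 := by rw [hWm]; exact hOzero _ hcsq'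
    have hOnn : ∀ V, 0 ≤ O V := by intro V; rw [hO]; positivity
    have hXzero : X = {W | O W = 0} := by
      rw [hX]; ext W
      simp only [Set.mem_setOf_eq]
      constructor
      · intro h
        have h' := h Wp
        rw [hOp] at h'
        linarith [hOnn W]
      · intro h V
        rw [h]; exact hOnn V
    have hXpair : X = {Wp, Wm} := by
      rw [hXzero]; ext W
      simp only [Set.mem_setOf_eq, Set.mem_insert_iff, Set.mem_singleton_iff]
      constructor
      · intro h
        obtain ⟨t, q, p, hq, e1, e2, eW, epa, epq⟩ := decomp Z₁ Z₂ W hZ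
        rw [hO, e1, e2, ← ha, ← hℓdef] at h
        have habsA := abs_nonneg (t^2 + q - d₁^2)
        have habsB := abs_nonneg ((t-ℓ)^2 + q - d₂^2)
        have hA : t^2 + q - d₁^2 = 0 := abs_eq_zero.1 (by linarith)
        have hB : (t-ℓ)^2 + q - d₂^2 = 0 := abs_eq_zero.1 (by linarith)
        have htt : t = t₀ := by
          rw [ht₀]
          field_simp
          linear_combination hA - hB
        have hqq : q = q₀ := by rw [hq₀, ← htt]; linarith [hA]
        obtain ⟨c, hcp⟩ := perp_complete a p hane epa
        have hcq : c^2 * ℓ^2 = q₀ := by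
          rw [← hqq, ← epq, hcp, ← hv, normsq_smul, hvn]
        have hc2 : c^2 = (r/ℓ)^2 :=
          mul_right_cancel₀ (pow_ne_zero 2 hℓ.ne') (hcq.trans hcsq.symm)
        have hcval : c = r/ℓ ∨ c = -(r/ℓ) := by
          have hmul : (c - r/ℓ) * (c + r/ℓ) = 0 := by linear_combination hc2
          rcases mul_eq_zero.1 hmul with h' | h'
          · left; linarith
          · right; linarith
        rcases hcval with h' | h'
        · left; rw [hWp, eW, ← ha, ← hℓdef, htt, hcp, h', ← hv]
        · right; rw [hWm, eW, ← ha, ← hℓdef, htt, hcp, h', ← hv]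
      · rintro (h | h) <;> rw [h]
        · exact hOp
        · exact hOm
    have hne : Wp ≠ Wm := by
      intro hcon
      rw [hWp, hWm] at hcon
      have h2v : (r/ℓ) • v = (-(r/ℓ)) • v := add_left_cancel hcon
      have hz : (r/ℓ - (-(r/ℓ))) • v = 0 := by rw [sub_smul, h2v, sub_self]
      rcases smul_eq_zero.1 hz with h' | h'
      · have hrl : 0 < r/ℓ := div_pos hrpos hℓ
        linarith [h']
      · exact hvne h'
    constructor
    · constructor
      · intro h
        rw [hXpair, Set.encard_pair hne] at h
        exact absurd h (by decide)
      · intro h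
        rcases h with h | h <;> linarith
    · exact ⟨fun _ => ⟨h2, h1⟩, fun _ => by rw [hXpair]; exact Set.encard_pair hne⟩
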